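/- For each n ≥ 1, let α_n be the factor of the Thue–Morse word of length 3·2^n starting at position 5. Then the square α_n α_n is overlap-free. -/

import Mathlib

-- Words are lists over the binary alphabet `Bool` (0 = `false`, 1 = `true`).

/-- An overlap is a word of the form `u v u v u` with `u` nonempty. -/
def Overlap (w : List Bool) : Prop :=
  ∃ u v : List Bool, u ≠ [] ∧ w = u ++ v ++ u ++ v ++ u

/-- `u` is a factor of `w`. -/
def IsFactor (u w : List Bool) : Prop := ∃ x y, w = x ++ u ++ y

/-- `w` is overlap-free if no factor of `w` is an overlap. -/
def OverlapFree (w : List Bool) : Prop := ∀ f, IsFactor f w → ¬ Overlap f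

/-- `u` is a square at position `p` in `w` (there is an occurrence of `u u`
starting right after the prefix of length `p`). -/
def SquareAt (w : List Bool) (p : ℕ) (u : List Bool) : Prop :=
  ∃ x y, w = x ++ u ++ u ++ y ∧ x.length = p

/-- `p` is a centre of a square in `w`. -/
def CentreOfSquare (w : List Bool) (p : ℕ) : Prop :=
  ∃ u, u ≠ [] ∧ SquareAt w p u

open Classical in
/-- `M w` is the number of positions `p`, `1 ≤ p < |w|`, that are centres of squares in `w`. -/
noncomputable def M (w : List Bool) : ℕ :=
  ((Finset.Ico 1 w.length).filter (fun p => CentreOfSquare w p)).card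

/-- The Thue–Morse morphism: μ(0) = 01, μ(1) = 10. -/
def mu (w : List Bool) : List Bool :=
  w.flatMap (fun b => if b then [true, false] else [false, true])

/-- `tmWord n = μⁿ(0)`, the prefix of length `2 ^ n` of the Thue–Morse word. -/
def tmWord : ℕ → List Bool
  | 0 => [false]
  | n + 1 => mu (tmWord n)

/-- `u` is a factor of the (infinite) Thue–Morse word. -/
def IsTMFactor (u : List Bool) : Prop := ∃ k, IsFactor u (tmWord k)

/-- `alpha n` is the factor of the Thue–Morse word of length `3 * 2 ^ n` starting at
position 5 (1-indexed; i.e. after the first four letters, so that `alpha 1 = 100110`). -/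
def alpha (n : ℕ) : List Bool := ((tmWord (n + 3)).drop 4).take (3 * 2 ^ n)

/-- `v` is bordered if some nonempty strictly shorter word is both a prefix and a suffix of `v`. -/
def Bordered (v : List Bool) : Prop :=
  ∃ b : List Bool, b ≠ [] ∧ b.length < v.length ∧ b <+: v ∧ b <:+ v

/-- `u` is the minimal-length square at position `p` of `w`. -/
def MinSquareAt (w : List Bool) (p : ℕ) (u : List Bool) : Prop :=
  u ≠ [] ∧ SquareAt w p u ∧ ∀ u', u' ≠ [] → SquareAt w p u' → u.length ≤ u'.length

/-- Thue–Morse sequence: parity of binary digit sum. -/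
def T (n : ℕ) : Bool := decide ((Nat.digits 2 n).sum % 2 = 1)

lemma T_zero : T 0 = false := by simp [T]

lemma T_two_mul (n : ℕ) : T (2 * n) = T n := by
  rcases Nat.eq_zero_or_pos n with h | h
  · simp [h]
  · unfold T
    rw [Nat.digits_def' (by norm_num : (1:ℕ) < 2) (by omega : 0 < 2 * n)]
    simp [Nat.mul_div_cancel_left _ (by norm_num : (0:ℕ) < 2), Nat.mul_mod_right]

lemma T_two_mul_add_one (n : ℕ) : T (2 * n + 1) = !T n := by
  unfold T
  rw [Nat.digits_def' (by norm_num : (1:ℕ) < 2) (by omega : 0 < 2 * n + 1)]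
  have h1 : (2 * n + 1) % 2 = 1 := by omega
  have h2 : (2 * n + 1) / 2 = n := by omega
  rw [h1, h2, List.sum_cons]
  rcases Nat.mod_two_eq_zero_or_one ((Nat.digits 2 n).sum) with h | h <;>
    simp [Nat.add_mod, h]

lemma T_three_two_pow (m : ℕ) : T (3 * 2 ^ m) = false := by
  induction m with
  | zero =>
      show T 3 = false
      have : (3:ℕ) = 2 * 1 + 1 := by norm_num
      rw [this, T_two_mul_add_one]
      have : (1:ℕ) = 2 * 0 + 1 := by norm_num
      rw [this, T_two_mul_add_one, T_zero]
      rfl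
  | succ m ih =>
      have : 3 * 2 ^ (m+1) = 2 * (3 * 2 ^ m) := by ring
      rw [this, T_two_mul, ih]

lemma T_one : T 1 = true := by
  have : (1:ℕ) = 2 * 0 + 1 := by norm_num
  rw [this, T_two_mul_add_one, T_zero]; rfl

lemma T_two : T 2 = true := by
  have : (2:ℕ) = 2 * 1 := by norm_num
  rw [this, T_two_mul, T_one]

lemma T_three : T 3 = false := by
  have := T_three_two_pow 0; simpa using this

lemma T_four : T 4 = true := by
  have : (4:ℕ) = 2 * 2 := by norm_num
  rw [this, T_two_mul, T_two]

/-- level functions -/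
def G1 (m k : ℕ) : Bool := T (1 + k % (3 * 2 ^ m))
def G2 (m k : ℕ) : Bool := T (2 + k % (3 * 2 ^ m))
def G4 (m k : ℕ) : Bool := T (4 + k % (3 * 2 ^ m))

lemma two_mul_mod (k M : ℕ) : (2 * k) % (3 * 2 ^ (M+1)) = 2 * (k % (3 * 2 ^ M)) := by
  have h : 3 * 2 ^ (M+1) = 2 * (3 * 2 ^ M) := by ring
  rw [h, Nat.mul_mod_mul_left]

lemma two_mul_add_one_mod (k M : ℕ) :
    (2 * k + 1) % (3 * 2 ^ (M+1)) = 2 * (k % (3 * 2 ^ M)) + 1 := by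
  have h : 3 * 2 ^ (M+1) = 2 * (3 * 2 ^ M) := by ring
  have h2 : 0 < 3 * 2 ^ M := by positivity
  have h3 : k % (3 * 2 ^ M) < 3 * 2 ^ M := Nat.mod_lt _ h2
  rw [h, Nat.add_mod, Nat.mul_mod_mul_left, Nat.mod_eq_of_lt (by omega : (1:ℕ) < 2 * (3 * 2 ^ M)),
    Nat.mod_eq_of_lt (by omega)]

lemma T_succ_mod (m k : ℕ) : T ((k + 1) % (3 * 2 ^ m)) = T (k % (3 * 2 ^ m) + 1) := by
  set M := 3 * 2 ^ m with hM
  have hMpos : 0 < M := by positivity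
  have hr : k % M < M := Nat.mod_lt _ hMpos
  rcases Nat.lt_or_ge (k % M) (M - 1) with h | h
  · have : (k + 1) % M = k % M + 1 := by
      conv_lhs => rw [← Nat.mod_add_div k M]
      rw [Nat.add_right_comm, Nat.add_mul_mod_self_left, Nat.mod_eq_of_lt (by omega)]
    rw [this]
  · have hr' : k % M = M - 1 := by omega
    have : (k + 1) % M = 0 := by
      conv_lhs => rw [← Nat.mod_add_div k M]
      rw [Nat.add_right_comm, Nat.add_mul_mod_self_left, hr']
      have : M - 1 + 1 = M := by omega
      rw [this, Nat.mod_self]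
    rw [this, hr']
    have : M - 1 + 1 = M := by omega
    rw [this, T_zero, hM, T_three_two_pow]

lemma G4_even (m k : ℕ) : G4 (m+1) (2 * k) = G2 m k := by
  unfold G4 G2
  rw [two_mul_mod]
  have : 4 + 2 * (k % (3 * 2 ^ m)) = 2 * (2 + k % (3 * 2 ^ m)) := by ring
  rw [this, T_two_mul]

lemma G4_odd (m k : ℕ) : G4 (m+1) (2 * k + 1) = !G2 m k := by
  unfold G4 G2
  rw [two_mul_add_one_mod]
  have : 4 + (2 * (k % (3 * 2 ^ m)) + 1) = 2 * (2 + k % (3 * 2 ^ m)) + 1 := by ring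
  rw [this, T_two_mul_add_one]

lemma G2_even (m k : ℕ) : G2 (m+1) (2 * k) = G1 m k := by
  unfold G2 G1
  rw [two_mul_mod]
  have : 2 + 2 * (k % (3 * 2 ^ m)) = 2 * (1 + k % (3 * 2 ^ m)) := by ring
  rw [this, T_two_mul]

lemma G2_odd (m k : ℕ) : G2 (m+1) (2 * k + 1) = !G1 m k := by
  unfold G2 G1
  rw [two_mul_add_one_mod]
  have : 2 + (2 * (k % (3 * 2 ^ m)) + 1) = 2 * (1 + k % (3 * 2 ^ m)) + 1 := by ring
  rw [this, T_two_mul_add_one]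

lemma G1_odd (m k : ℕ) : G1 (m+1) (2 * k + 1) = G1 m k := by
  unfold G1
  rw [two_mul_add_one_mod]
  have : 1 + (2 * (k % (3 * 2 ^ m)) + 1) = 2 * (k % (3 * 2 ^ m) + 1) := by ring
  rw [this, T_two_mul, Nat.add_comm 1]

lemma G1_even (m k : ℕ) : G1 (m+1) (2 * k + 2) = !G1 m k := by
  unfold G1
  have h : 2 * k + 2 = 2 * (k + 1) := by ring
  rw [h, two_mul_mod]
  have : 1 + 2 * ((k+1) % (3 * 2 ^ m)) = 2 * ((k+1) % (3 * 2 ^ m)) + 1 := by ring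
  rw [this, T_two_mul_add_one, T_succ_mod, Nat.add_comm 1]

lemma G1_per (m k : ℕ) : G1 m (k + 3 * 2 ^ m) = G1 m k := by
  unfold G1; rw [Nat.add_mod_right]

/-- If `g` alternates on blocks starting at parity `ε`, then `g` has no factor
of odd period `p` and length `2p+1`. -/
lemma odd_case (g : ℕ → Bool) (ε : ℕ)
    (hb : ∀ j, j % 2 = ε % 2 → g (j + 1) = !g j)
    (q p : ℕ) (hp : p % 2 = 1)
    (H : ∀ i, q ≤ i → i ≤ q + p → g i = g (i + p)) : False := by
  set e := if q % 2 = ε % 2 then q else q + 1 with he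
  have heq : q ≤ e ∧ e ≤ q + 1 ∧ e % 2 = ε % 2 := by
    by_cases h : q % 2 = ε % 2 <;> simp [he, h] <;> omega
  obtain ⟨he1, he2, he3⟩ := heq
  set a := g e with ha
  have key : ∀ d, e + 2 * d ≤ q + p → g (e + 2 * d) = a ∧ g (e + 2 * d + 1) = !a := by
    intro d
    induction d with
    | zero => intro _; exact ⟨rfl, hb e he3⟩
    | succ d ih =>
        intro hd
        have hd' : e + 2 * d ≤ q + p - 2 := by omega
        obtain ⟨ih1, ih2⟩ := ih (by omega)
        set j := e + 2 * d with hj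
        have hj1p : g (j + 1 + p) = !a := by
          rw [← H (j + 1) (by omega) (by omega)]; exact ih2
        have hblock : g (j + 1 + p + 1) = !g (j + 1 + p) := by
          apply hb; omega
        have hj2 : g (j + 2) = a := by
          have := H (j + 2) (by omega) (by omega)
          rw [this]
          have : j + 2 + p = j + 1 + p + 1 := by omega
          rw [this, hblock, hj1p, Bool.not_not]
        have hj3 : g (j + 2 + 1) = !a := by
          rw [hb (j + 2) (by omega), hj2]
        constructor
        · have : e + 2 * (d + 1) = j + 2 := by omega
          rw [this]; exact hj2
        · have : e + 2 * (d + 1) + 1 = j + 2 + 1 := by omega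
          rw [this]; exact hj3
  obtain ⟨d, hd⟩ : ∃ d, p = 2 * d + 1 := ⟨p / 2, by omega⟩
  have h1 := (key d (by omega)).2
  have h2 := H e (by omega) (by omega)
  rw [show e + 2 * d + 1 = e + p by omega] at h1
  rw [← ha, h1] at h2
  exact absurd h2 (by simp)

lemma even_desc0 (g h : ℕ → Bool)
    (h0 : ∀ k, g (2 * k) = h k) (h1 : ∀ k, g (2 * k + 1) = !h k)
    (q r : ℕ)
    (H : ∀ i, q ≤ i → i ≤ q + 2 * r → g i = g (i + 2 * r)) :
    ∃ q', ∀ i, q' ≤ i → i ≤ q' + r → h i = h (i + r) := by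
  rcases Nat.even_or_odd q with ⟨s, hs⟩ | ⟨s, hs⟩
  · refine ⟨s, fun i hi1 hi2 => ?_⟩
    have := H (2 * i) (by omega) (by omega)
    rw [show 2 * i + 2 * r = 2 * (i + r) by omega, h0, h0] at this
    exact this
  · refine ⟨s, fun i hi1 hi2 => ?_⟩
    have := H (2 * i + 1) (by omega) (by omega)
    rw [show 2 * i + 1 + 2 * r = 2 * (i + r) + 1 by omega, h1, h1] at this
    simpa using this

lemma even_desc1 (g h : ℕ → Bool)
    (h1 : ∀ k, g (2 * k + 1) = h k) (h2 : ∀ k, g (2 * k + 2) = !h k)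
    (q r : ℕ) (hq : 1 ≤ q)
    (H : ∀ i, q ≤ i → i ≤ q + 2 * r → g i = g (i + 2 * r)) :
    ∃ q', ∀ i, q' ≤ i → i ≤ q' + r → h i = h (i + r) := by
  rcases Nat.even_or_odd q with ⟨s, hs⟩ | ⟨s, hs⟩
  · have hs1 : 1 ≤ s := by omega
    refine ⟨s - 1, fun i hi1 hi2 => ?_⟩
    have := H (2 * i + 2) (by omega) (by omega)
    rw [show 2 * i + 2 + 2 * r = 2 * (i + r) + 2 by omega, h2, h2] at this
    simpa using this
  · refine ⟨s, fun i hi1 hi2 => ?_⟩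
    have := H (2 * i + 1) (by omega) (by omega)
    rw [show 2 * i + 1 + 2 * r = 2 * (i + r) + 1 by omega, h1, h1] at this
    exact this

lemma G1_zero_val (k : ℕ) : G1 0 k = !decide (k % 3 = 2) := by
  unfold G1
  norm_num
  have h3 : k % 3 < 3 := Nat.mod_lt _ (by norm_num)
  interval_cases h : k % 3
  · simp [T_one]
  · simp [T_two]
  · simp [T_three]

lemma S1 : ∀ m q p, 1 ≤ p → p ≤ 3 * 2 ^ m - 1 →
    (∀ i, q ≤ i → i ≤ q + p → G1 m i = G1 m (i + p)) → False := by
  intro m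
  induction m with
  | zero =>
      intro q p hp1 hp2 H
      simp only [pow_zero, mul_one] at hp2
      have h0 := H q (le_refl _) (by omega)
      have h1 := H (q + 1) (by omega) (by omega)
      simp only [G1_zero_val] at h0 h1
      rw [Bool.not_inj_iff, decide_eq_decide] at h0 h1
      interval_cases p
      · omega
      · have h2 := H (q + 2) (by omega) (by omega)
        simp only [G1_zero_val] at h2
        rw [Bool.not_inj_iff, decide_eq_decide] at h2
        omega
  | succ m ih =>
      intro q p hp1 hp2 H
      rcases Nat.even_or_odd p with ⟨r, hr⟩ | hodd
      · -- p even
        have hP : 0 < 3 * 2 ^ (m + 1) := by positivity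
        have Hs : ∀ i, q + 3 * 2 ^ (m+1) ≤ i → i ≤ (q + 3 * 2 ^ (m+1)) + p →
            G1 (m+1) i = G1 (m+1) (i + p) := by
          intro i hi1 hi2
          have e1 : G1 (m+1) i = G1 (m+1) (i - 3 * 2 ^ (m+1)) := by
            conv_lhs => rw [show i = (i - 3 * 2 ^ (m+1)) + 3 * 2 ^ (m+1) by omega]
            rw [G1_per]
          have e2 : G1 (m+1) (i + p) = G1 (m+1) ((i - 3 * 2 ^ (m+1)) + p) := by
            conv_lhs => rw [show i + p = ((i - 3 * 2 ^ (m+1)) + p) + 3 * 2 ^ (m+1) by omega]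
            rw [G1_per]
          rw [e1, e2]
          exact H (i - 3 * 2 ^ (m+1)) (by omega) (by omega)
        rw [show p = 2 * r by omega] at Hs
        obtain ⟨q', Hq'⟩ := even_desc1 (G1 (m+1)) (G1 m)
          (fun k => G1_odd m k) (fun k => by rw [show 2*k+2 = 2*k+2 from rfl]; exact G1_even m k)
          (q + 3 * 2 ^ (m+1)) r (by omega) Hs
        have hr1 : 1 ≤ r := by omega
        have hr2 : r ≤ 3 * 2 ^ m - 1 := by
          have : (2:ℕ) ^ (m+1) = 2 * 2 ^ m := by ring
          omega
        exact ih q' r hr1 hr2 Hq'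
      · -- p odd
        obtain ⟨r, hr⟩ := hodd
        refine odd_case (G1 (m+1)) 1 ?_ q p (by omega) H
        intro j hj
        obtain ⟨k, rfl⟩ : ∃ k, j = 2 * k + 1 := ⟨j / 2, by omega⟩
        rw [show 2 * k + 1 + 1 = 2 * k + 2 from rfl, G1_even, G1_odd]

lemma G2_zero_val (k : ℕ) : G2 0 k = !decide (k % 3 = 1) := by
  unfold G2
  norm_num
  have h3 : k % 3 < 3 := Nat.mod_lt _ (by norm_num)
  interval_cases h : k % 3
  · simp [T_two]
  · simp [T_three]
  · simp [T_four]

lemma S2 : ∀ m q p, 1 ≤ p → p ≤ 3 * 2 ^ m - 1 →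
    (∀ i, q ≤ i → i ≤ q + p → G2 m i = G2 m (i + p)) → False := by
  intro m
  induction m with
  | zero =>
      intro q p hp1 hp2 H
      simp only [pow_zero, mul_one] at hp2
      have h0 := H q (le_refl _) (by omega)
      have h1 := H (q + 1) (by omega) (by omega)
      simp only [G2_zero_val] at h0 h1
      rw [Bool.not_inj_iff, decide_eq_decide] at h0 h1
      interval_cases p
      · omega
      · have h2 := H (q + 2) (by omega) (by omega)
        simp only [G2_zero_val] at h2
        rw [Bool.not_inj_iff, decide_eq_decide] at h2
        omega
  | succ m _ =>
      intro q p hp1 hp2 H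
      rcases Nat.even_or_odd p with ⟨r, hr⟩ | hodd
      · rw [show p = 2 * r by omega] at H
        obtain ⟨q', Hq'⟩ := even_desc0 (G2 (m+1)) (G1 m) (G2_even m) (G2_odd m) q r H
        have : (2:ℕ) ^ (m+1) = 2 * 2 ^ m := by ring
        exact S1 m q' r (by omega) (by omega) Hq'
      · obtain ⟨r2, hr2⟩ := hodd
        refine odd_case (G2 (m+1)) 0 ?_ q p (by omega) H
        intro j hj
        obtain ⟨k, rfl⟩ : ∃ k, j = 2 * k := ⟨j / 2, by omega⟩
        rw [G2_odd, G2_even]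

lemma S4 : ∀ n, 1 ≤ n → ∀ q p, 1 ≤ p → p ≤ 3 * 2 ^ n - 1 →
    (∀ i, q ≤ i → i ≤ q + p → G4 n i = G4 n (i + p)) → False := by
  intro n hn q p hp1 hp2 H
  obtain ⟨m, rfl⟩ : ∃ m, n = m + 1 := ⟨n - 1, by omega⟩
  rcases Nat.even_or_odd p with ⟨r, hr⟩ | hodd
  · rw [show p = 2 * r by omega] at H
    obtain ⟨q', Hq'⟩ := even_desc0 (G4 (m+1)) (G2 m) (G4_even m) (G4_odd m) q r H
    have : (2:ℕ) ^ (m+1) = 2 * 2 ^ m := by ring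
    exact S2 m q' r (by omega) (by omega) Hq'
  · obtain ⟨r2, hr2⟩ := hodd
    refine odd_case (G4 (m+1)) 0 ?_ q p (by omega) H
    intro j hj
    obtain ⟨k, rfl⟩ : ∃ k, j = 2 * k := ⟨j / 2, by omega⟩
    rw [G4_odd, G4_even]

lemma mu_cons (x : Bool) (t : List Bool) : mu (x :: t) = x :: (!x) :: mu t := by
  cases x <;> simp [mu]

lemma mu_nil : mu [] = [] := rfl

lemma mu_length (w : List Bool) : (mu w).length = 2 * w.length := by
  induction w with
  | nil => rfl
  | cons x t ih => rw [mu_cons]; simp [ih]; omega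

lemma mu_getElem?_even (w : List Bool) (i : ℕ) : (mu w)[2 * i]? = w[i]? := by
  induction w generalizing i with
  | nil => simp [mu_nil]
  | cons x t ih =>
      rw [mu_cons]
      cases i with
      | zero => simp
      | succ j =>
          have h1 : 2 * (j + 1) = (2 * j + 1) + 1 := by ring
          rw [h1]
          simp only [List.getElem?_cons_succ]
          exact ih j

lemma mu_getElem?_odd (w : List Bool) (i : ℕ) :
    (mu w)[2 * i + 1]? = (w[i]?).map (fun b => !b) := by
  induction w generalizing i with
  | nil => simp [mu_nil]
  | cons x t ih =>
      rw [mu_cons]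
      cases i with
      | zero => simp
      | succ j =>
          have h1 : 2 * (j + 1) + 1 = (2 * j + 1 + 1) + 1 := by ring
          rw [h1]
          simp only [List.getElem?_cons_succ]
          exact ih j

lemma tmWord_length (k : ℕ) : (tmWord k).length = 2 ^ k := by
  induction k with
  | zero => rfl
  | succ k ih => show (mu (tmWord k)).length = 2 ^ (k+1); rw [mu_length, ih]; ring

lemma tmWord_getElem? (k : ℕ) : ∀ i, i < 2 ^ k → (tmWord k)[i]? = some (T i) := by
  induction k with
  | zero =>
      intro i hi
      interval_cases i
      simp [tmWord, T_zero]
  | succ k ih =>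
      intro i hi
      show (mu (tmWord k))[i]? = some (T i)
      rcases Nat.even_or_odd i with ⟨j, hj⟩ | ⟨j, hj⟩
      · rw [show i = 2 * j by omega, mu_getElem?_even, ih j (by omega), T_two_mul]
      · rw [show i = 2 * j + 1 by omega, mu_getElem?_odd, ih j (by omega)]
        simp [T_two_mul_add_one]

lemma alpha_getElem? (n i : ℕ) (hi : i < 3 * 2 ^ n) : (alpha n)[i]? = some (T (4 + i)) := by
  unfold alpha
  rw [List.getElem?_take, if_pos hi, List.getElem?_drop]
  exact tmWord_getElem? (n+3) (4 + i) (by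
    have h1 : (2:ℕ) ^ (n+3) = 8 * 2 ^ n := by ring
    have h2 : (1:ℕ) ≤ 2 ^ n := Nat.one_le_two_pow
    omega)

lemma alpha_length (n : ℕ) : (alpha n).length = 3 * 2 ^ n := by
  unfold alpha
  rw [List.length_take, List.length_drop, tmWord_length]
  have h1 : (2:ℕ) ^ (n+3) = 8 * 2 ^ n := by ring
  have h2 : (1:ℕ) ≤ 2 ^ n := Nat.one_le_two_pow
  omega

lemma double_getElem? (n i : ℕ) (hi : i < 2 * (3 * 2 ^ n)) :
    (alpha n ++ alpha n)[i]? = some (T (4 + i % (3 * 2 ^ n))) := by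
  rcases Nat.lt_or_ge i (3 * 2 ^ n) with h | h
  · rw [List.getElem?_append, if_pos (by rw [alpha_length]; exact h),
      alpha_getElem? n i h, Nat.mod_eq_of_lt h]
  · rw [List.getElem?_append_right (by rw [alpha_length]; exact h), alpha_length,
      alpha_getElem? n (i - 3 * 2 ^ n) (by omega)]
    have hmod : i % (3 * 2 ^ n) = i - 3 * 2 ^ n := by
      rw [Nat.mod_eq_sub_mod h, Nat.mod_eq_of_lt (by omega)]
    rw [hmod]

lemma overlap_period {w f : List Bool} (hf : IsFactor f w) (ho : Overlap f) :
    ∃ q p, 1 ≤ p ∧ q + 2 * p < w.length ∧ ∀ j ≤ p, w[q + j]? = w[q + j + p]? := by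
  obtain ⟨u, v, hu, hfe⟩ := ho
  obtain ⟨x, y, hw⟩ := hf
  have hul : 1 ≤ u.length := by
    cases u with
    | nil => exact absurd rfl hu
    | cons a t => simp
  set p := u.length + v.length with hp
  have hfl : f.length = 2 * p + u.length := by
    rw [hfe]; simp only [List.length_append]; omega
  have hwl : w.length = x.length + f.length + y.length := by
    rw [hw]; simp only [List.length_append]
  refine ⟨x.length, p, by omega, by omega, ?_⟩
  have ew : ∀ t, t < f.length → w[x.length + t]? = f[t]? := by
    intro t ht
    rw [hw, List.append_assoc, List.getElem?_append_right (by omega), Nat.add_sub_cancel_left,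
      List.getElem?_append, if_pos ht]
  have hf1 : f = (u ++ v ++ u) ++ (v ++ u) := by rw [hfe]; simp
  have hf2 : f = (u ++ v) ++ (u ++ v ++ u) := by rw [hfe]; simp
  have huvu : (u ++ v ++ u).length = p + u.length := by
    simp only [List.length_append]; omega
  intro j hj
  have e1 : f[j]? = (u ++ v ++ u)[j]? := by
    rw [hf1, List.getElem?_append, if_pos (by rw [huvu]; omega)]
  have e2 : f[j + p]? = (u ++ v ++ u)[j]? := by
    have hz : (u ++ v).length = p := by rw [List.length_append]
    rw [hf2, List.getElem?_append_right (by omega)]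
    have : j + p - (u ++ v).length = j := by omega
    rw [this]
  rw [show x.length + j + p = x.length + (j + p) by omega]
  rw [ew j (by omega), ew (j + p) (by omega), e1, e2]
theorem stmt11 (n : ℕ) (hn : 1 ≤ n) :
    OverlapFree (alpha n ++ alpha n) := by
  intro f hfac hov
  obtain ⟨q, p, hp1, hlen, H⟩ := overlap_period hfac hov
  have hwl : (alpha n ++ alpha n).length = 2 * (3 * 2 ^ n) := by
    rw [List.length_append, alpha_length]; ring
  rw [hwl] at hlen
  have h2n : (1:ℕ) ≤ 2 ^ n := Nat.one_le_two_pow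
  refine S4 n hn q p hp1 (by omega) ?_
  intro i hi1 hi2
  have hh := H (i - q) (by omega)
  rw [show q + (i - q) = i by omega, show i + p = i + p from rfl] at hh
  rw [double_getElem? n i (by omega), double_getElem? n (i + p) (by omega)] at hh
  exact Option.some.inj hh
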